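/- For the d-dimensional Student family with ν degrees of freedom written as a λ-exponential family with λ = −2/(ν+d) and T(x) = (x, xxᵀ), the natural parameters associated to (μ, Σ) ∈ ℝ^d × S_{++}^d are ϑ₁ = (ν+d)/(ν + μᵀΣ⁻¹μ) · Σ⁻¹μ and ϑ₂ = −(ν+d)/(2(ν + μᵀΣ⁻¹μ)) · Σ⁻¹, and the inverse map is μ = −½ ϑ₂⁻¹ ϑ₁ and Σ = −(2(ν+d) + ϑ₁ᵀϑ₂⁻¹ϑ₁)/(4ν) · ϑ₂⁻¹; these maps are mutually inverse bijections between ℝ^d × S_{++}^d and {(ϑ₁,ϑ₂) ∈ ℝ^d × S_{--}^d : 2(ν+d) + ϑ₁ᵀϑ₂⁻¹ϑ₁ > 0}. -/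

import Mathlib

open Matrix

/-- First natural parameter `ϑ₁ = (ν+d)/(ν + μᵀΣ⁻¹μ) · Σ⁻¹μ` of the Student family. -/
noncomputable def natParam1 (d : ℕ) (ν : ℝ) (μ : Fin d → ℝ)
    (S : Matrix (Fin d) (Fin d) ℝ) : Fin d → ℝ :=
  ((ν + d) / (ν + μ ⬝ᵥ S⁻¹.mulVec μ)) • S⁻¹.mulVec μ

/-- Second natural parameter `ϑ₂ = −(ν+d)/(2(ν + μᵀΣ⁻¹μ)) · Σ⁻¹`. -/
noncomputable def natParam2 (d : ℕ) (ν : ℝ) (μ : Fin d → ℝ)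
    (S : Matrix (Fin d) (Fin d) ℝ) : Matrix (Fin d) (Fin d) ℝ :=
  (-((ν + d) / (2 * (ν + μ ⬝ᵥ S⁻¹.mulVec μ)))) • S⁻¹

/-- Inverse map: location `μ = −½ ϑ₂⁻¹ ϑ₁`. -/
noncomputable def invLoc (d : ℕ) (t1 : Fin d → ℝ)
    (t2 : Matrix (Fin d) (Fin d) ℝ) : Fin d → ℝ :=
  (-(1 : ℝ) / 2) • t2⁻¹.mulVec t1

/-- Inverse map: shape `Σ = −(2(ν+d) + ϑ₁ᵀϑ₂⁻¹ϑ₁)/(4ν) · ϑ₂⁻¹`. -/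
noncomputable def invShape (d : ℕ) (ν : ℝ) (t1 : Fin d → ℝ)
    (t2 : Matrix (Fin d) (Fin d) ℝ) : Matrix (Fin d) (Fin d) ℝ :=
  (-((2 * (ν + d) + t1 ⬝ᵥ t2⁻¹.mulVec t1) / (4 * ν))) • t2⁻¹

lemma posdef_smul' {d : ℕ} {c : ℝ} (hc : 0 < c) {M : Matrix (Fin d) (Fin d) ℝ}
    (hM : M.PosDef) : (c • M).PosDef := by
  constructor
  · unfold Matrix.IsHermitian
    rw [conjTranspose_smul, hM.1.eq]
    simp
  · intro x hx
    exact (hM.smul hc).2 hx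

lemma my_smul_inv {d : ℕ} {c : ℝ} (hc : c ≠ 0) {M : Matrix (Fin d) (Fin d) ℝ}
    (hM : IsUnit M.det) : (c • M)⁻¹ = c⁻¹ • M⁻¹ := by
  apply Matrix.inv_eq_right_inv
  rw [smul_mul_smul_comm, Matrix.mul_nonsing_inv _ hM, mul_inv_cancel₀ hc, one_smul]


/-- Proposition 3(i): the natural parameterization of the Student family and its inverse
are mutually inverse bijections between `ℝ^d × S_{++}^d` and
`{(ϑ₁,ϑ₂) ∈ ℝ^d × S_{--}^d : 2(ν+d) + ϑ₁ᵀϑ₂⁻¹ϑ₁ > 0}`. -/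
theorem student_natural_parameters_bijection (d : ℕ) (ν : ℝ) (hν : 0 < ν) :
    (∀ (μ : Fin d → ℝ) (S : Matrix (Fin d) (Fin d) ℝ), S.PosDef →
      (-(natParam2 d ν μ S)).PosDef
      ∧ 0 < 2 * (ν + d)
          + (natParam1 d ν μ S) ⬝ᵥ (natParam2 d ν μ S)⁻¹.mulVec (natParam1 d ν μ S)
      ∧ invLoc d (natParam1 d ν μ S) (natParam2 d ν μ S) = μ
      ∧ invShape d ν (natParam1 d ν μ S) (natParam2 d ν μ S) = S)
    ∧ (∀ (t1 : Fin d → ℝ) (t2 : Matrix (Fin d) (Fin d) ℝ), (-t2).PosDef →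
        0 < 2 * (ν + d) + t1 ⬝ᵥ t2⁻¹.mulVec t1 →
        (invShape d ν t1 t2).PosDef
        ∧ natParam1 d ν (invLoc d t1 t2) (invShape d ν t1 t2) = t1
        ∧ natParam2 d ν (invLoc d t1 t2) (invShape d ν t1 t2) = t2) := by
  have hd0 : (0:ℝ) ≤ d := Nat.cast_nonneg d
  have hνd : 0 < ν + d := by linarith
  constructor
  · -- forward direction
    intro μ S hS
    set q : ℝ := μ ⬝ᵥ S⁻¹.mulVec μ with hqdef
    have hq : 0 ≤ q := by simpa using hS.inv.posSemidef.dotProduct_mulVec_nonneg μ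
    have hc : 0 < ν + q := by linarith
    have hSdet : IsUnit S.det := hS.det_pos.ne'.isUnit
    have hSidet : IsUnit S⁻¹.det := S.isUnit_nonsing_inv_det hSdet
    have ha : 0 < (ν + d) / (ν + q) := div_pos hνd hc
    have hcoef : -((ν + ↑d) / (2 * (ν + q))) ≠ 0 := by
      have := div_pos hνd (by linarith : (0:ℝ) < 2 * (ν + q))
      exact neg_ne_zero.mpr this.ne'
    have hinv2 : (natParam2 d ν μ S)⁻¹ = (-((ν + d) / (2 * (ν + q))))⁻¹ • S := by
      rw [natParam2, ← hqdef, my_smul_inv hcoef hSidet, S.nonsing_inv_nonsing_inv hSdet]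
    have hmv : (natParam2 d ν μ S)⁻¹.mulVec (natParam1 d ν μ S) = (-2 : ℝ) • μ := by
      rw [hinv2, natParam1, ← hqdef, mulVec_smul, smul_mulVec, mulVec_mulVec,
        Matrix.mul_nonsing_inv _ hSdet, one_mulVec, smul_smul]
      congr 1
      have h1 : ν + q ≠ 0 := hc.ne'
      have h2 : ν + (d:ℝ) ≠ 0 := hνd.ne'
      rw [inv_neg, inv_div]
      field_simp
    have hdot : (natParam1 d ν μ S) ⬝ᵥ (natParam2 d ν μ S)⁻¹.mulVec (natParam1 d ν μ S)
        = -2 * ((ν + d) / (ν + q)) * q := by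
      rw [hmv, natParam1, ← hqdef, smul_dotProduct, dotProduct_smul, dotProduct_comm, ← hqdef]
      simp only [smul_eq_mul]
      ring
    have hpos : 0 < 2 * (ν + d) + (natParam1 d ν μ S) ⬝ᵥ
        (natParam2 d ν μ S)⁻¹.mulVec (natParam1 d ν μ S) := by
      rw [hdot]
      have hne : ν + q ≠ 0 := hc.ne'
      have h1 : 2 * (ν + ↑d) + -2 * ((ν + ↑d) / (ν + q)) * q = 2 * (ν + d) * ν / (ν + q) := by
        field_simp
        ring
      rw [h1]
      positivity
    refine ⟨?_, hpos, ?_, ?_⟩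
    · rw [natParam2, ← hqdef, ← neg_smul, neg_neg]
      exact posdef_smul' (div_pos hνd (by linarith)) hS.inv
    · rw [invLoc, hmv, smul_smul]
      norm_num
    · rw [invShape, hdot, hinv2, smul_smul]
      have hne : ν + q ≠ 0 := hc.ne'
      have hne2 : ν + (d:ℝ) ≠ 0 := hνd.ne'
      have hne3 : ν ≠ 0 := hν.ne'
      have h1 : -((2 * (ν + ↑d) + -2 * ((ν + ↑d) / (ν + q)) * q) / (4 * ν)) *
          (-((ν + ↑d) / (2 * (ν + q))))⁻¹ = 1 := by
        rw [inv_neg, inv_div]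
        field_simp
        ring
      rw [h1, one_smul]
  · -- reverse direction
    intro t1 t2 ht2 hK
    set D : ℝ := t1 ⬝ᵥ t2⁻¹.mulVec t1 with hDdef
    set K : ℝ := 2 * (ν + d) + D with hKdef
    have hKpos : 0 < K := hK
    have ht2det : IsUnit t2.det := by
      have h1 : IsUnit (-t2).det := ht2.det_pos.ne'.isUnit
      rw [Matrix.det_neg] at h1
      exact (IsUnit.mul_iff.mp h1).2
    have ht2idet : IsUnit t2⁻¹.det := t2.isUnit_nonsing_inv_det ht2det
    have hinvneg : t2⁻¹ = -(-t2)⁻¹ := by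
      rw [show -t2 = (-1 : ℝ) • t2 from (neg_one_smul ℝ t2).symm,
        my_smul_inv (by norm_num) ht2det]
      norm_num
    have hDle : D ≤ 0 := by
      have h1 : 0 ≤ t1 ⬝ᵥ (-t2)⁻¹.mulVec t1 := by
        simpa using ht2.inv.posSemidef.dotProduct_mulVec_nonneg t1
      rw [hDdef, hinvneg, neg_mulVec, dotProduct_neg]
      linarith
    have hKcoef : 0 < K / (4 * ν) := div_pos hKpos (by linarith)
    have hSeq : invShape d ν t1 t2 = (K / (4 * ν)) • (-t2)⁻¹ := by
      rw [invShape, ← hDdef, ← hKdef, hinvneg, smul_neg, ← neg_smul, neg_neg]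
    have hSpos : (invShape d ν t1 t2).PosDef := by
      rw [hSeq]; exact posdef_smul' hKcoef ht2.inv
    have hcoef2 : -(K / (4 * ν)) ≠ 0 := neg_ne_zero.mpr hKcoef.ne'
    have hSinv : (invShape d ν t1 t2)⁻¹ = (-(K / (4 * ν)))⁻¹ • t2 := by
      rw [invShape, ← hDdef, ← hKdef, my_smul_inv hcoef2 ht2idet,
        t2.nonsing_inv_nonsing_inv ht2det]
    have hKne : K ≠ 0 := hKpos.ne'
    have hνne : ν ≠ 0 := hν.ne'
    have hK4 : (-(K / (4 * ν)))⁻¹ = -(4 * ν / K) := by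
      rw [inv_neg, inv_div]
    have hmv2 : (invShape d ν t1 t2)⁻¹.mulVec (invLoc d t1 t2) = (2 * ν / K) • t1 := by
      rw [hSinv, hK4, invLoc, mulVec_smul, smul_mulVec, mulVec_mulVec,
        Matrix.mul_nonsing_inv _ ht2det, one_mulVec, smul_smul]
      congr 1
      field_simp
      ring
    have hqv : (invLoc d t1 t2) ⬝ᵥ (invShape d ν t1 t2)⁻¹.mulVec (invLoc d t1 t2)
        = -(ν / K) * D := by
      rw [hmv2, invLoc, smul_dotProduct, dotProduct_smul, dotProduct_comm, ← hDdef]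
      simp only [smul_eq_mul]
      field_simp
    have hccc : ν + (invLoc d t1 t2) ⬝ᵥ (invShape d ν t1 t2)⁻¹.mulVec (invLoc d t1 t2)
        = 2 * ν * (ν + d) / K := by
      rw [hqv]
      have : D = K - 2 * (ν + d) := by rw [hKdef]; ring
      rw [this]
      field_simp
      ring
    refine ⟨hSpos, ?_, ?_⟩
    · rw [natParam1, hccc, hmv2, smul_smul]
      have hνdne : ν + (d:ℝ) ≠ 0 := hνd.ne'
      have h1 : (ν + ↑d) / (2 * ν * (ν + ↑d) / K) * (2 * ν / K) = 1 := by
        field_simp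
      rw [h1, one_smul]
    · rw [natParam2, hccc, hSinv, hK4, smul_smul]
      have h1 : -((ν + ↑d) / (2 * (2 * ν * (ν + ↑d) / K))) * -(4 * ν / K) = 1 := by
        field_simp
        ring
      rw [h1, one_smul]
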